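/- There exist infinitely many primes p such that p - 2^i is composite or nonpositive and p + 2^i is composite, for every nonnegative integer i with 2^i < p. -/

import Mathlib

/-- A natural number is composite if it exceeds `1` and is not prime. -/
def Composite (n : ℕ) : Prop := 1 < n ∧ ¬ n.Prime

set_option maxRecDepth 100000
set_option exponentiation.threshold 1000

namespace CSAux

def M : ℕ := 47867742232066880047611079
def N : ℕ := 33241542480794255062005345795
def S : List ℕ := [3,5,7,11,13,17,19,31,37,41,61,73,97,109,151,241,257,331]

lemma hMN : M < N := by decide
lemma hN1 : 1 < N := by decide
lemma hcop : Nat.Coprime M N := by decide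
lemma hpow : 2 ^ 720 % N = 1 % N := by decide
lemma hS : ∀ q ∈ S, 1 < q ∧ q < N ∧ q ∣ N := by decide
lemma hcovP : ∀ j < 720, ∃ q ∈ S, (M + 2 ^ j) % q = 0 := by decide
lemma hcovM : ∀ j < 720, ∃ q ∈ S, M % q = 2 ^ j % q := by decide
lemma hne : ∀ j < 720, ∀ q ∈ S, (q + 2 ^ j) % N ≠ M := by decide

instance : NeZero N := ⟨by decide⟩

lemma key (i : ℕ) : 2 ^ i ≡ 2 ^ (i % 720) [MOD N] := by
  conv_lhs => rw [← Nat.div_add_mod i 720]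
  rw [pow_add, pow_mul]
  calc (2 ^ 720) ^ (i / 720) * 2 ^ (i % 720)
      ≡ 1 ^ (i / 720) * 2 ^ (i % 720) [MOD N] :=
        Nat.ModEq.mul (Nat.ModEq.pow _ hpow) rfl
    _ = 2 ^ (i % 720) := by rw [one_pow, one_mul]

end CSAux

open CSAux in
/-- There are infinitely many primes `p` such that for every `i` with `2^i < p`,
both `p - 2^i` and `p + 2^i` are composite. -/
theorem stmt_10 :
    {p : ℕ | p.Prime ∧ ∀ i : ℕ, 2 ^ i < p →
      Composite (p - 2 ^ i) ∧ Composite (p + 2 ^ i)}.Infinite := by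
  have hunit : IsUnit ((M : ℕ) : ZMod N) := by
    rw [ZMod.isUnit_iff_coprime]; exact hcop
  have hinf := Nat.infinite_setOfPred_prime_and_eq_mod (q := N) hunit
  have hinf2 := hinf.diff (Set.finite_Iic N)
  refine hinf2.mono ?_
  rintro p ⟨⟨hp, hpm⟩, hpN⟩
  simp only [Set.mem_Iic, not_le] at hpN
  rw [ZMod.natCast_eq_natCast_iff] at hpm
  refine ⟨hp, fun i h2i => ?_⟩
  have hj : i % 720 < 720 := Nat.mod_lt _ (by norm_num)
  have hkey : 2 ^ i ≡ 2 ^ (i % 720) [MOD N] := key i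
  have hpow0 : 0 < 2 ^ i := Nat.two_pow_pos i
  constructor
  · -- p - 2^i composite
    obtain ⟨q, hqS, hq⟩ := hcovM (i % 720) hj
    obtain ⟨hq1, hqN, hqdvd⟩ := hS q hqS
    -- p ≡ 2^i [MOD q]
    have hq' : M ≡ 2 ^ (i % 720) [MOD q] := hq
    have h1 : p ≡ 2 ^ i [MOD q] :=
      ((hpm.of_dvd hqdvd).trans hq').trans ((hkey.of_dvd hqdvd).symm)
    have hdvd : q ∣ p - 2 ^ i := (Nat.modEq_iff_dvd' h2i.le).mp h1.symm
    have hne' : p - 2 ^ i ≠ q := by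
      intro heq
      have hpq : p = q + 2 ^ i := by omega
      have h3 : q + 2 ^ (i % 720) ≡ M [MOD N] :=
        (Nat.ModEq.add_left q hkey).symm.trans (hpq ▸ hpm)
      rw [Nat.ModEq, Nat.mod_eq_of_lt hMN] at h3
      exact hne (i % 720) hj q hqS h3
    have hpos : 0 < p - 2 ^ i := by omega
    have hge : q ≤ p - 2 ^ i := Nat.le_of_dvd hpos hdvd
    refine ⟨by omega, fun hpr => ?_⟩
    rcases (hpr.eq_one_or_self_of_dvd q hdvd) with h | h <;> omega
  · -- p + 2^i composite
    obtain ⟨q, hqS, hq⟩ := hcovP (i % 720) hj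
    obtain ⟨hq1, hqN, hqdvd⟩ := hS q hqS
    have h1 : p + 2 ^ i ≡ M + 2 ^ (i % 720) [MOD q] :=
      (Nat.ModEq.add hpm hkey).of_dvd hqdvd
    have hdvd : q ∣ p + 2 ^ i := by
      have : (p + 2 ^ i) % q = 0 := by
        rw [Nat.ModEq] at h1; rw [h1]; exact hq
      exact Nat.dvd_of_mod_eq_zero this
    refine ⟨by have := hp.two_le; omega, fun hpr => ?_⟩
    rcases (hpr.eq_one_or_self_of_dvd q hdvd) with h | h <;> omega
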